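/- Suppose τ𝒳 = 𝒳. Let X^M → M be an 𝒳-precover of an object M and let C → X^M → M → ΣC be a distinguished triangle. Then the morphism C → X^M is an 𝒳-preenvelope of C. -/

import Mathlib

/-!
STATEMENT 5.  Same setup as Lemma 2.2, with `τ𝒳 = 𝒳`.  If `X^M → M` is an
`𝒳`-precover of `M` and `C → X^M → M → ΣC` is a distinguished triangle, then
`C → X^M` is an `𝒳`-preenvelope of `C`.
-/

open CategoryTheory CategoryTheory.Limits CategoryTheory.Pretriangulated

/-- `f : A ⟶ B` is an `𝒳`-monomorphism: every morphism from `A` to an object of `𝒳`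
factors through `f`. -/
def XMono {C : Type*} [Category C] (𝒳 : Set C) {A B : C} (f : A ⟶ B) : Prop :=
  ∀ (X : C), X ∈ 𝒳 → ∀ (g : A ⟶ X), ∃ h : B ⟶ X, f ≫ h = g

/-- `f : A ⟶ B` is an `𝒳`-epimorphism: every morphism from an object of `𝒳` to `B`
factors through `f`. -/
def XEpi {C : Type*} [Category C] (𝒳 : Set C) {A B : C} (f : A ⟶ B) : Prop :=
  ∀ (X : C), X ∈ 𝒳 → ∀ (g : X ⟶ B), ∃ h : X ⟶ A, h ≫ f = g

/-- The data of a Serre functor `S` on a `k`-linear category: a `k`-linear autoequivalence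
together with isomorphisms `Hom(A,B) ≅ Hom(B, S A)^∨`, natural in `A` and `B`. -/
structure SerreFunctorData (k : Type*) [Field k] (C : Type*) [Category C]
    [Preadditive C] [Linear k C] where
  S : C ⥤ C
  additive : S.Additive
  linear : S.Linear k
  isEquivalence : S.IsEquivalence
  pairing : ∀ A B : C, (A ⟶ B) ≃ₗ[k] Module.Dual k (B ⟶ S.obj A)
  natB : ∀ {A B B' : C} (f : A ⟶ B) (g : B ⟶ B') (h : B' ⟶ S.obj A),
    pairing A B' (f ≫ g) h = pairing A B f (g ≫ h)
  natA : ∀ {A A' B : C} (e : A' ⟶ A) (f : A ⟶ B) (h : B ⟶ S.obj A'),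
    pairing A' B (e ≫ f) h = pairing A B f (h ≫ S.map e)

theorem cocone_map_of_precover_is_preenvelope
    (k : Type*) [Field k] [IsAlgClosed k]
    {C : Type*} [Category C] [Preadditive C] [Linear k C] [HasZeroObject C]
    [HasShift C ℤ] [∀ n : ℤ, (CategoryTheory.shiftFunctor C n).Additive]
    [Pretriangulated C] [HasBinaryBiproducts C]
    [∀ A B : C, FiniteDimensional k (A ⟶ B)] [IsIdempotentComplete C]
    (SD : SerreFunctorData k C)
    (𝒳 : Set C)
    (hiso : ∀ {A B : C}, (A ≅ B) → A ∈ 𝒳 → B ∈ 𝒳)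
    (hsum : ∀ {A B : C}, A ∈ 𝒳 → B ∈ 𝒳 → (A ⊞ B) ∈ 𝒳)
    (hsummand : ∀ {A B : C} (i : A ⟶ B) (r : B ⟶ A), i ≫ r = 𝟙 A → B ∈ 𝒳 → A ∈ 𝒳)
    -- `τ𝒳 = 𝒳`, where `τ = Σ⁻¹ ∘ S`:
    (hτ : ∀ X : C, X ∈ 𝒳 ↔ ((SD.S.obj X)⟦(-1 : ℤ)⟧) ∈ 𝒳)
    (M XM Z : C) (e : Z ⟶ XM) (p : XM ⟶ M) (h : M ⟶ Z⟦(1 : ℤ)⟧)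
    (hXM : XM ∈ 𝒳) (hp : XEpi 𝒳 p)
    (hT : Triangle.mk e p h ∈ distTriang C) :
    XMono 𝒳 e ∧ XM ∈ 𝒳 := by
  letI := SD.isEquivalence
  refine ⟨?_, hXM⟩
  intro X hX g
  -- Step 1: `h ≫ g⟦1⟧ = 0`, by Serre duality.
  have hph : p ≫ h = 0 := comp_distTriang_mor_zero₂₃ _ hT
  have hz : h ≫ (shiftFunctor C (1 : ℤ)).map g = 0 := by
    apply (SD.pairing M ((shiftFunctor C (1 : ℤ)).obj X)).injective
    rw [map_zero]
    apply LinearMap.ext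
    intro ψ
    -- Write `ψ : X⟦1⟧ ⟶ S M` as `cI.inv ≫ S.map q` with `q : Y ⟶ M`, `Y = S⁻¹(X⟦1⟧)`.
    set Y : C := SD.S.inv.obj ((shiftFunctor C (1 : ℤ)).obj X) with hYdef
    have cI : SD.S.obj Y ≅ (shiftFunctor C (1 : ℤ)).obj X :=
      SD.S.asEquivalence.counitIso.app ((shiftFunctor C (1 : ℤ)).obj X)
    have hY : Y ∈ 𝒳 := by
      refine (hτ Y).mpr (hiso ?_ hX)
      exact (shiftFunctorCompIsoId C (1 : ℤ) (-1 : ℤ) (by ring)).symm.app X ≪≫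
        (shiftFunctor C (-1 : ℤ)).mapIso cI.symm
    set q : Y ⟶ M := SD.S.preimage (cI.hom ≫ ψ) with hqdef
    have hq : SD.S.map q = cI.hom ≫ ψ := SD.S.map_preimage _
    have hψ : ψ = cI.inv ≫ SD.S.map q := by rw [hq, Iso.inv_hom_id_assoc]
    obtain ⟨r, hr⟩ := hp Y hY q
    calc (SD.pairing M ((shiftFunctor C (1 : ℤ)).obj X)) (h ≫ (shiftFunctor C (1 : ℤ)).map g) ψ
        = (SD.pairing M ((shiftFunctor C (1 : ℤ)).obj Z)) h
            ((shiftFunctor C (1 : ℤ)).map g ≫ ψ) := SD.natB _ _ _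
      _ = (SD.pairing M ((shiftFunctor C (1 : ℤ)).obj Z)) h
            (((shiftFunctor C (1 : ℤ)).map g ≫ cI.inv ≫ SD.S.map r) ≫ SD.S.map p) := by
          rw [hψ, ← hr, SD.S.map_comp]
          simp only [Category.assoc]
      _ = (SD.pairing XM ((shiftFunctor C (1 : ℤ)).obj Z)) (p ≫ h)
            ((shiftFunctor C (1 : ℤ)).map g ≫ cI.inv ≫ SD.S.map r) := (SD.natA _ _ _).symm
      _ = 0 := by rw [hph, map_zero, LinearMap.zero_apply]
  -- Step 2: factor `g` through `e` using the inverse rotation of the triangle.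
  have hz2 : (Triangle.invRotate (Triangle.mk e p h)).mor₁ ≫ g = 0 := by
    dsimp [Triangle.invRotate]
    change (-(shiftFunctor C (-1 : ℤ)).map h ≫ (shiftFunctorCompIsoId C (1 : ℤ) (-1 : ℤ) (by ring)).hom.app Z) ≫ g = 0
    rw [Preadditive.neg_comp, Category.assoc]
    have hnat := (shiftFunctorCompIsoId C (1 : ℤ) (-1 : ℤ) (by ring)).hom.naturality g
    dsimp at hnat
    rw [← hnat, ← Category.assoc, ← Functor.map_comp, hz, Functor.map_zero, zero_comp,
      neg_zero]
  obtain ⟨t, ht⟩ := Triangle.yoneda_exact₂ _ (inv_rot_of_distTriang _ hT) g hz2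
  exact ⟨t, ht.symm⟩
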